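/- arXiv:2507.18375 — 3 statements merged into one kernel-verified Lean document; each statement's English description precedes it below -/
import Mathlib

section
/- There are a commutative semiring R and an element r ∈ R (one may take R = ℕ with its usual addition and multiplication, and r = 1) such that no terminating Semiring Turing Machine M over R satisfies ‖M‖ = rec_r on its inputs; i.e., for every terminating SRTM M over R there is an input x with ‖M‖(x) ≠ rec_r(x). -/
open scoped Classical

/-- A Semiring Turing Machine (SRTM) over a semiring `R` with input alphabet `A`.
States are `Fin nQ`; the tape alphabet is `A ⊕ Fin nE` where the `Fin nE` part
consists of the non-input symbols, among them the blank `blankE` and the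
semiring placeholder `phE`.  Transition weights are `Option R`: `some r` is a
fixed weight `r ∈ weights` (the finite set `R'`), `none` is the placeholder
`X` (weight taken from the tape). Directions: `true` = +1, `false` = −1. -/
structure SRTM (R : Type) (A : Type) where
  nQ : ℕ
  nE : ℕ
  blankE : Fin nE
  phE : Fin nE
  blank_ne_ph : blankE ≠ phE
  start : Fin nQ
  weights : Set R
  weights_fin : weights.Finite
  trans : Set ((Fin nQ × (A ⊕ Fin nE)) × (Fin nQ × (A ⊕ Fin nE)) × Bool × Option R)
  trans_fin : trans.Finite
  trans_wt : ∀ t ∈ trans, ∀ r : R, t.2.2.2 = some r → r ∈ weights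

namespace SRTM

variable {R A : Type}

abbrev Sym (M : SRTM R A) : Type := A ⊕ Fin M.nE

abbrev Trans (M : SRTM R A) : Type :=
  (Fin M.nQ × M.Sym) × (Fin M.nQ × M.Sym) × Bool × Option R

/-- A configuration: state, tape (symbol and semiring value per cell), head position. -/
abbrev Config (M : SRTM R A) : Type := Fin M.nQ × (ℕ → M.Sym × R) × ℕ

/-- The transitions applicable in a given configuration. -/
def applicable (M : SRTM R A) (c : M.Config) : Set M.Trans :=
  {t | t ∈ M.trans ∧ t.1.1 = c.1 ∧ t.1.2 = (c.2.1 c.2.2).1}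

/-- The configuration resulting from applying transition `t` in configuration `c`. -/
def stepTo (M : SRTM R A) (t : M.Trans) (c : M.Config) : M.Config :=
  ⟨t.2.1.1,
    Function.update c.2.1 c.2.2 (t.2.1.2, (c.2.1 c.2.2).2),
    ((c.2.2 : ℤ) + (if t.2.2.1 then 1 else -1)).natAbs⟩

/-- The weight of transition `t` in configuration `c`. -/
def wt (M : SRTM R A) (t : M.Trans) (c : M.Config) : R :=
  t.2.2.2.getD (c.2.1 c.2.2).2

/-- Fuel-indexed value of a configuration; for a terminating machine with path
length bound `ℓ s`, `val (ℓ s)` computes the recursively defined value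
`val(c) = ⊕_τ wt(τ,c) ⊗ val(τ(c))` (empty sum = 1). -/
noncomputable def val [CommSemiring R] (M : SRTM R A) : ℕ → M.Config → R
  | 0, _ => 1
  | n + 1, c =>
    if M.applicable c = ∅ then 1
    else ∑ᶠ t ∈ M.applicable c, M.wt t c * val M n (M.stepTo t c)

/-- The initial tape determined by an input string. -/
def initTape [Zero R] (M : SRTM R A) (s : List (A ⊕ R)) : ℕ → M.Sym × R := fun i =>
  match s[i]? with
  | some (Sum.inl a) => (Sum.inl a, 0)
  | some (Sum.inr r) => (Sum.inr M.phE, r)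
  | none => (Sum.inr M.blankE, 0)

def initConfig [Zero R] (M : SRTM R A) (s : List (A ⊕ R)) : M.Config :=
  ⟨M.start, M.initTape s, 0⟩

/-- One computation step. -/
def StepRel (M : SRTM R A) (c c' : M.Config) : Prop :=
  ∃ t ∈ M.applicable c, c' = M.stepTo t c

/-- `PathLen M n c c'`: there is a computation path of length `n` from `c` to `c'`. -/
def PathLen (M : SRTM R A) : ℕ → M.Config → M.Config → Prop
  | 0, c, c' => c' = c
  | n + 1, c, c'' => ∃ c', StepRel M c c' ∧ PathLen M n c' c''

/-- `ℓ` bounds the length of every computation path of `M` on every input. -/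
def BoundedBy [Zero R] (M : SRTM R A) (ℓ : List (A ⊕ R) → ℕ) : Prop :=
  ∀ (s : List (A ⊕ R)) (n : ℕ) (c : M.Config),
    PathLen M n (M.initConfig s) c → n ≤ ℓ s

def Terminating [Zero R] (M : SRTM R A) : Prop := ∃ ℓ, M.BoundedBy ℓ

/-- The output `‖M‖(s)` of a terminating SRTM, computed using a path length bound `ℓ`. -/
noncomputable def output [CommSemiring R] (M : SRTM R A)
    (ℓ : List (A ⊕ R) → ℕ) (s : List (A ⊕ R)) : R :=
  val M (ℓ s) (M.initConfig s)

end SRTM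

/-- `NP_new(R)`: functions computed by terminating SRTMs over `R` with
polynomially bounded computation path lengths. -/
def NPnew (R : Type) [CommSemiring R] (A : Type) [Fintype A]
    (f : List (A ⊕ R) → R) : Prop :=
  ∃ (M : SRTM R A) (ℓ : List (A ⊕ R) → ℕ) (p : Polynomial ℕ),
    M.BoundedBy ℓ ∧ (∀ s, ℓ s ≤ p.eval s.length) ∧ ∀ s, f s = M.output ℓ s

open Classical in
/-- The function `rec_r` on strings over `Σ_I ∪ R`: returns `r` if the first
symbol is the semiring value `r`, `x₀ ⊕ r` if the first symbol is a semiring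
value `x₀ ≠ r`, and `0` otherwise. -/
noncomputable def recr {R : Type} [CommSemiring R] {A : Type} (r : R)
    (x : List (A ⊕ R)) : R :=
  match x.head? with
  | some (Sum.inr s) => if s = r then r else s + r
  | _ => 0

/-- `rec_r` is not computable by any terminating SRTM over `R` (with any finite
input alphabet): every terminating SRTM differs from `rec_r` on some input. -/
def RecrUncomputable (R : Type) [CommSemiring R] (r : R) : Prop :=
  ∀ (A : Type), Fintype A →
    ∀ (M : SRTM R A) (ℓ : List (A ⊕ R) → ℕ), M.BoundedBy ℓ →
      ∃ x : List (A ⊕ R), M.output ℓ x ≠ recr r x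


section AuxProof

open Polynomial

variable {A : Type} (M : SRTM ℕ A)

/-- Parametrized standard configuration: semiring value `n` at cell 0, `0` elsewhere. -/
def cfgP (q : Fin M.nQ) (σ : ℕ → M.Sym) (m n : ℕ) : M.Config :=
  ⟨q, fun i => (σ i, if i = 0 then n else 0), m⟩

lemma applicable_cfgP (q : Fin M.nQ) (σ : ℕ → M.Sym) (m n : ℕ) :
    M.applicable (cfgP M q σ m n) = {t | t ∈ M.trans ∧ t.1.1 = q ∧ t.1.2 = σ m} := rfl

lemma stepTo_cfgP (t : M.Trans) (q : Fin M.nQ) (σ : ℕ → M.Sym) (m n : ℕ) :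
    M.stepTo t (cfgP M q σ m n) =
      cfgP M t.2.1.1 (Function.update σ m t.2.1.2)
        (((m : ℤ) + (if t.2.2.1 then 1 else -1)).natAbs) n := by
  unfold SRTM.stepTo cfgP
  simp only [Prod.mk.injEq, true_and, and_true, eq_self_iff_true]
  funext i
  by_cases h : i = m <;> simp [Function.update, h]

noncomputable def wpoly (t : M.Trans) (m : ℕ) : Polynomial ℕ :=
  match t.2.2.2 with
  | some r => Polynomial.C r
  | none => if m = 0 then Polynomial.X else 0

lemma wt_cfgP (t : M.Trans) (q : Fin M.nQ) (σ : ℕ → M.Sym) (m n : ℕ) :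
    M.wt t (cfgP M q σ m n) = (wpoly M t m).eval n := by
  obtain ⟨a, b, d, w⟩ := t
  cases w with
  | none =>
    by_cases h : m = 0 <;> simp [SRTM.wt, wpoly, cfgP, h]
  | some r => simp [SRTM.wt, wpoly, cfgP]

lemma poly_val : ∀ (fuel : ℕ) (q : Fin M.nQ) (σ : ℕ → M.Sym) (m : ℕ),
    ∃ p : Polynomial ℕ, ∀ n, M.val fuel (cfgP M q σ m n) = p.eval n := by
  intro fuel
  induction fuel with
  | zero => exact fun q σ m => ⟨1, fun n => by simp [SRTM.val]⟩
  | succ fuel ih =>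
    intro q σ m
    by_cases hA : ({t | t ∈ M.trans ∧ t.1.1 = q ∧ t.1.2 = σ m} : Set M.Trans) = ∅
    · exact ⟨1, fun n => by rw [SRTM.val, applicable_cfgP, if_pos hA]; simp⟩
    · have hfin : ({t | t ∈ M.trans ∧ t.1.1 = q ∧ t.1.2 = σ m} : Set M.Trans).Finite :=
        M.trans_fin.subset (fun t ht => ht.1)
      refine ⟨∑ t ∈ hfin.toFinset, wpoly M t m *
        Classical.choose (ih t.2.1.1 (Function.update σ m t.2.1.2)
          (((m : ℤ) + (if t.2.2.1 then 1 else -1)).natAbs)), fun n => ?_⟩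
      rw [SRTM.val, applicable_cfgP, if_neg hA]
      have hcoe := finsum_mem_coe_finset (s := hfin.toFinset)
        (f := fun t => M.wt t (cfgP M q σ m n) * M.val fuel (M.stepTo t (cfgP M q σ m n)))
      rw [hfin.coe_toFinset] at hcoe
      rw [hcoe]
      rw [Polynomial.eval_finset_sum]
      refine Finset.sum_congr rfl (fun t ht => ?_)
      rw [Polynomial.eval_mul, wt_cfgP, stepTo_cfgP,
        Classical.choose_spec (ih t.2.1.1 (Function.update σ m t.2.1.2)
          (((m : ℤ) + (if t.2.2.1 then 1 else -1)).natAbs)) n]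

/-- Forget semiring values on the tape (set them all to 0). -/
def zval (c : M.Config) : M.Config := ⟨c.1, fun i => ((c.2.1 i).1, 0), c.2.2⟩

lemma applicable_zval (c : M.Config) : M.applicable (zval M c) = M.applicable c := rfl

lemma stepTo_zval (t : M.Trans) (c : M.Config) :
    M.stepTo t (zval M c) = zval M (M.stepTo t c) := by
  unfold SRTM.stepTo zval
  simp only [Prod.mk.injEq, true_and, and_true, eq_self_iff_true]
  funext i
  by_cases h : i = c.2.2 <;> simp [Function.update, h]

lemma pathLen_zval : ∀ (k : ℕ) (c c' : M.Config), SRTM.PathLen M k c c' →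
    SRTM.PathLen M k (zval M c) (zval M c') := by
  intro k
  induction k with
  | zero => exact fun c c' h => congrArg (zval M) h
  | succ k ih =>
    rintro c c'' ⟨c', ⟨t, ht, rfl⟩, hp⟩
    exact ⟨zval M (M.stepTo t c),
      ⟨t, by rwa [applicable_zval], (stepTo_zval M t c).symm⟩, ih _ _ hp⟩

lemma val_stable : ∀ (N : ℕ) (c : M.Config),
    (∀ k c', SRTM.PathLen M k c c' → k ≤ N) →
    ∀ f, N ≤ f → M.val f c = M.val N c := by
  intro N
  induction N with
  | zero =>
    intro c hc f _
    have hemp : M.applicable c = ∅ := by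
      by_contra h
      obtain ⟨t, ht⟩ := Set.nonempty_iff_ne_empty.2 h
      exact absurd (hc 1 (M.stepTo t c) ⟨M.stepTo t c, ⟨t, ht, rfl⟩, rfl⟩) (by norm_num)
    cases f with
    | zero => rfl
    | succ f => simp only [SRTM.val]; rw [if_pos hemp]
  | succ N ih =>
    intro c hc f hf
    obtain ⟨g, rfl⟩ : ∃ g, f = g + 1 := ⟨f - 1, by omega⟩
    rw [SRTM.val, SRTM.val]
    by_cases hemp : M.applicable c = ∅
    · rw [if_pos hemp, if_pos hemp]
    · rw [if_neg hemp, if_neg hemp]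
      refine finsum_mem_congr rfl (fun t ht => ?_)
      have hbnd : ∀ k c', SRTM.PathLen M k (M.stepTo t c) c' → k ≤ N := by
        intro k c' hpp
        have := hc (k + 1) c' ⟨M.stepTo t c, ⟨t, ht, rfl⟩, hpp⟩
        omega
      rw [ih (M.stepTo t c) hbnd g (by omega)]

def sig0 : ℕ → M.Sym := fun i => if i = 0 then Sum.inr M.phE else Sum.inr M.blankE

lemma init_cfgP (n : ℕ) :
    M.initConfig [Sum.inr n] = cfgP M M.start (sig0 M) 0 n := by
  unfold SRTM.initConfig cfgP
  simp only [Prod.mk.injEq, true_and, and_true, eq_self_iff_true]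
  funext i
  cases i with
  | zero => simp [SRTM.initTape, sig0]
  | succ i => simp [SRTM.initTape, sig0]

lemma zval_init (n : ℕ) :
    zval M (M.initConfig [Sum.inr n]) = M.initConfig [(Sum.inr 0 : A ⊕ ℕ)] := by
  unfold zval SRTM.initConfig
  simp only [Prod.mk.injEq, true_and, and_true, eq_self_iff_true]
  funext i
  cases i with
  | zero => simp [SRTM.initTape]
  | succ i => simp [SRTM.initTape]

end AuxProof

/-- There are a commutative semiring `R` and an element `r ∈ R` such that no
terminating Semiring Turing Machine over `R` computes `rec_r`. -/
theorem exists_semiring_recr_not_SRTM_computable :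
    ∃ (R : Type) (inst : CommSemiring R) (r : R),
      @RecrUncomputable R inst r := by
  refine ⟨ℕ, inferInstance, 1, ?_⟩
  intro A _ M ℓ hb
  by_contra hcon
  push_neg at hcon
  have hK : ∀ (n k : ℕ) (c : M.Config),
      SRTM.PathLen M k (M.initConfig [Sum.inr n]) c → k ≤ ℓ [Sum.inr 0] := by
    intro n k c hp
    have h2 := pathLen_zval M k _ _ hp
    rw [zval_init] at h2
    exact hb [Sum.inr 0] k _ h2
  have hout : ∀ n : ℕ, M.output ℓ [Sum.inr n] =
      M.val (ℓ [Sum.inr 0]) (M.initConfig [Sum.inr n]) := by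
    intro n
    have hbnd : ∀ k c, SRTM.PathLen M k (M.initConfig [Sum.inr n]) c →
        k ≤ min (ℓ [Sum.inr 0]) (ℓ [Sum.inr n]) :=
      fun k c hp => le_min (hK n k c hp) (hb [Sum.inr n] k c hp)
    unfold SRTM.output
    rw [val_stable M _ _ hbnd (ℓ [Sum.inr n]) (min_le_right _ _),
        val_stable M _ _ hbnd (ℓ [Sum.inr 0]) (min_le_left _ _)]
  obtain ⟨p, hp⟩ := poly_val M (ℓ [Sum.inr 0]) M.start (sig0 M) 0
  have key : ∀ n : ℕ, p.eval n = recr 1 ([Sum.inr n] : List (A ⊕ ℕ)) := by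
    intro n
    have h := hcon [Sum.inr n]
    rw [hout n, init_cfgP, hp n] at h
    exact h
  have hrec : ∀ n : ℕ, recr (1 : ℕ) ([Sum.inr n] : List (A ⊕ ℕ)) =
      if n = 1 then 1 else n + 1 := by
    intro n
    simp [recr]
  have hZ : p.map (Nat.castRingHom ℤ) - (Polynomial.X + 1) = 0 := by
    apply Polynomial.eq_zero_of_infinite_isRoot
    have hinf : ((fun n : ℕ => (n : ℤ)) '' Set.Ici 2).Infinite :=
      (Set.Ici_infinite 2).image (Set.injOn_of_injective Nat.cast_injective)
    refine hinf.mono ?_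
    · rintro x ⟨n, hn, rfl⟩
      have hn2 : 2 ≤ n := hn
      have h1 : p.eval n = n + 1 := by
        rw [key n, hrec n, if_neg (by omega)]
      have h2 : ((p.eval n : ℕ) : ℤ) = (n : ℤ) + 1 := by exact_mod_cast congrArg (Nat.cast : ℕ → ℤ) h1
      simp only [Set.mem_setOf_eq, Polynomial.IsRoot, Polynomial.eval_sub,
        Polynomial.eval_add, Polynomial.eval_X, Polynomial.eval_one,
        Polynomial.eval_natCast_map, Nat.coe_castRingHom, Nat.cast_id, h2]
      ring
  have hmap : p.map (Nat.castRingHom ℤ) = Polynomial.X + 1 := by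
    linear_combination (norm := ring_nf) hZ
  have h1 : ((p.eval 1 : ℕ) : ℤ) = 2 := by
    have := Polynomial.eval_natCast_map (Nat.castRingHom ℤ) p 1
    rw [hmap] at this
    simpa using this.symm
  have h2 : p.eval 1 = 1 := by
    rw [key 1, hrec 1, if_pos rfl]
  omega
end

section
/- For every commutative semiring R and every finite alphabet Σ_I, the SRTM M over R with R' = {0, 1}, states Q = {ι, right, left, turn_left, turn_right, fin}, tape alphabet Σ = Σ_I ∪ {⊔, X}, initial state ι, and transition relation δ consisting of: ((ι, X), (fin, X), 1, 0); ((ι, σ), (right, ⊔), 1, 1) for each σ ∈ Σ_I; ((ι, ⊔), (fin, ⊔), 1, 1); ((right, σ), (right, σ), 1, 1) for each σ ∈ Σ_I; ((right, X), (right, X), 1, 1); ((right, ⊔), (turn_left, ⊔), −1, 1); ((turn_left, X), (left, ⊔), −1, X); ((turn_left, σ), (fin, σ), −1, 0) for each σ ∈ Σ_I; ((turn_left, ⊔), (fin, ⊔), −1, 0); ((left, X), (left, X), −1, 1); ((left, σ), (left, σ), −1, 1) for each σ ∈ Σ_I; ((left, ⊔), (turn_right, ⊔), 1, 1); ((turn_right,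 X), (fin, X), 1, 0); ((turn_right, σ), (right, ⊔), 1, 1) for each σ ∈ Σ_I; ((turn_right, ⊔), (fin, ⊔), 1, 1), is terminating with polynomially bounded computation path lengths and satisfies ‖M‖ = f_R, the conditional product function. -/
open scoped Classical

open Classical in
/-- The conditional product function `f_R`: if the input is a block of
alphabet letters followed by an equally long block of semiring values, return
the product of the semiring values; otherwise return `0`. -/
noncomputable def condProd {R A : Type} [CommSemiring R] (x : List (A ⊕ R)) : R :=
  if ∃ (as : List A) (rs : List R),
      x = as.map Sum.inl ++ rs.map Sum.inr ∧ as.length = rs.length then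
    (x.filterMap (fun e => match e with | Sum.inl _ => none | Sum.inr r => some r)).prod
  else 0

/-- The type of transitions of the conditional-product machine:
6 states (0 = ι, 1 = right, 2 = left, 3 = turn_left, 4 = turn_right, 5 = fin),
2 extra symbols (0 = ⊔, 1 = X). -/
abbrev CPT (R A : Type) : Type :=
  (Fin 6 × (A ⊕ Fin 2)) × (Fin 6 × (A ⊕ Fin 2)) × Bool × Option R

/-- The transitions of the conditional-product machine not involving an input letter. -/
def cpConst (R A : Type) [CommSemiring R] : Fin 10 → CPT R A := fun i =>
  match i.val with
  | 0 => ((0, Sum.inr 1), (5, Sum.inr 1), true, some 0)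
  | 1 => ((0, Sum.inr 0), (5, Sum.inr 0), true, some 1)
  | 2 => ((1, Sum.inr 1), (1, Sum.inr 1), true, some 1)
  | 3 => ((1, Sum.inr 0), (3, Sum.inr 0), false, some 1)
  | 4 => ((3, Sum.inr 1), (2, Sum.inr 0), false, none)
  | 5 => ((3, Sum.inr 0), (5, Sum.inr 0), false, some 0)
  | 6 => ((2, Sum.inr 1), (2, Sum.inr 1), false, some 1)
  | 7 => ((2, Sum.inr 0), (4, Sum.inr 0), true, some 1)
  | 8 => ((4, Sum.inr 1), (5, Sum.inr 1), true, some 0)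
  | _ => ((4, Sum.inr 0), (5, Sum.inr 0), true, some 1)

/-- The five letter-parametrized transition families of the conditional-product machine. -/
def cpLetter (R A : Type) [CommSemiring R] : Fin 5 → A → CPT R A := fun i a =>
  match i.val with
  | 0 => ((0, Sum.inl a), (1, Sum.inr 0), true, some 1)
  | 1 => ((1, Sum.inl a), (1, Sum.inl a), true, some 1)
  | 2 => ((3, Sum.inl a), (5, Sum.inl a), false, some 0)
  | 3 => ((2, Sum.inl a), (2, Sum.inl a), false, some 1)
  | _ => ((4, Sum.inl a), (1, Sum.inr 0), true, some 1)

/-- The SRTM of Example 2.6 computing the conditional product function. -/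
noncomputable def condProdMachine (R A : Type) [CommSemiring R] [Fintype A] :
    SRTM R A where
  nQ := 6
  nE := 2
  blankE := 0
  phE := 1
  blank_ne_ph := by decide
  start := 0
  weights := {0, 1}
  weights_fin := (Set.finite_singleton (1 : R)).insert 0
  trans := Set.range (fun i : Fin 10 ⊕ Fin 5 × A =>
    Sum.elim (cpConst R A) (fun p => cpLetter R A p.1 p.2) i)
  trans_fin := Set.finite_range _
  trans_wt := by
    rintro t ⟨i, rfl⟩ r hr
    rcases i with i | ⟨i, a⟩ <;> fin_cases i <;>
      simp_all [cpConst, cpLetter, Set.mem_insert_iff]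


namespace CPAux

variable {R A : Type} [CommSemiring R] [Fintype A]

/-- Pair type of a tape cell. -/
abbrev Pr (R A : Type) := (A ⊕ Fin 2) × R

/-- The deterministic transition lookup table. -/
def dlt (q : Fin 6) (s : A ⊕ Fin 2) : Option (CPT R A) :=
  match s with
  | Sum.inl a =>
    if q = 0 then some (cpLetter R A 0 a)
    else if q = 1 then some (cpLetter R A 1 a)
    else if q = 3 then some (cpLetter R A 2 a)
    else if q = 2 then some (cpLetter R A 3 a)
    else if q = 4 then some (cpLetter R A 4 a)
    else none
  | Sum.inr k =>
    if k = 1 then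
      if q = 0 then some (cpConst R A 0)
      else if q = 1 then some (cpConst R A 2)
      else if q = 3 then some (cpConst R A 4)
      else if q = 2 then some (cpConst R A 6)
      else if q = 4 then some (cpConst R A 8)
      else none
    else
      if q = 0 then some (cpConst R A 1)
      else if q = 1 then some (cpConst R A 3)
      else if q = 3 then some (cpConst R A 5)
      else if q = 2 then some (cpConst R A 7)
      else if q = 4 then some (cpConst R A 9)
      else none

lemma dlt_five (s : A ⊕ Fin 2) : dlt (R := R) 5 s = none := by
  rcases s with a | k
  · simp [dlt]
  · fin_cases k <;> simp [dlt]

lemma applicable_eq (c : (condProdMachine R A).Config) :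
    (condProdMachine R A).applicable c
      = (dlt c.1 ((c.2.1 c.2.2).1)).elim ∅ (fun t => {t}) := by
  obtain ⟨q, T, p⟩ := c
  ext t
  simp only [SRTM.applicable, Set.mem_setOf_eq, condProdMachine, Set.mem_range]
  constructor
  · rintro ⟨⟨i, rfl⟩, h1, h2⟩
    rcases i with i | ⟨i, a'⟩ <;> fin_cases i <;> (subst h1; rw [← h2]; rfl)
  · intro h
    rcases hσ : ((T p).1) with a | k
    · rw [hσ] at h
      fin_cases q
      · obtain rfl : t = cpLetter R A 0 a := h
        exact ⟨⟨Sum.inr (0, a), rfl⟩, rfl, rfl⟩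
      · obtain rfl : t = cpLetter R A 1 a := h
        exact ⟨⟨Sum.inr (1, a), rfl⟩, rfl, rfl⟩
      · obtain rfl : t = cpLetter R A 3 a := h
        exact ⟨⟨Sum.inr (3, a), rfl⟩, rfl, rfl⟩
      · obtain rfl : t = cpLetter R A 2 a := h
        exact ⟨⟨Sum.inr (2, a), rfl⟩, rfl, rfl⟩
      · obtain rfl : t = cpLetter R A 4 a := h
        exact ⟨⟨Sum.inr (4, a), rfl⟩, rfl, rfl⟩
      · exact absurd (h : t ∈ (∅ : Set _)) (Set.notMem_empty t)
    · rw [hσ] at h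
      fin_cases k <;> fin_cases q
      · obtain rfl : t = cpConst R A 1 := h
        exact ⟨⟨Sum.inl 1, rfl⟩, rfl, rfl⟩
      · obtain rfl : t = cpConst R A 3 := h
        exact ⟨⟨Sum.inl 3, rfl⟩, rfl, rfl⟩
      · obtain rfl : t = cpConst R A 7 := h
        exact ⟨⟨Sum.inl 7, rfl⟩, rfl, rfl⟩
      · obtain rfl : t = cpConst R A 5 := h
        exact ⟨⟨Sum.inl 5, rfl⟩, rfl, rfl⟩
      · obtain rfl : t = cpConst R A 9 := h
        exact ⟨⟨Sum.inl 9, rfl⟩, rfl, rfl⟩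
      · exact absurd (h : t ∈ (∅ : Set _)) (Set.notMem_empty t)
      · obtain rfl : t = cpConst R A 0 := h
        exact ⟨⟨Sum.inl 0, rfl⟩, rfl, rfl⟩
      · obtain rfl : t = cpConst R A 2 := h
        exact ⟨⟨Sum.inl 2, rfl⟩, rfl, rfl⟩
      · obtain rfl : t = cpConst R A 6 := h
        exact ⟨⟨Sum.inl 6, rfl⟩, rfl, rfl⟩
      · obtain rfl : t = cpConst R A 4 := h
        exact ⟨⟨Sum.inl 4, rfl⟩, rfl, rfl⟩
      · obtain rfl : t = cpConst R A 8 := h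
        exact ⟨⟨Sum.inl 8, rfl⟩, rfl, rfl⟩
      · exact absurd (h : t ∈ (∅ : Set _)) (Set.notMem_empty t)


set_option linter.unusedSectionVars false

/-- Deterministic step function. -/
noncomputable def cpStep (c : (condProdMachine R A).Config) : (condProdMachine R A).Config :=
  match dlt c.1 ((c.2.1 c.2.2).1) with
  | none => c
  | some t => (condProdMachine R A).stepTo t c

lemma val_fin {c : (condProdMachine R A).Config} (h : c.1 = (5 : Fin 6)) :
    ∀ n, (condProdMachine R A).val n c = 1
  | 0 => rfl
  | n + 1 => by
    have happ : (condProdMachine R A).applicable c = ∅ := by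
      rw [applicable_eq, h]; erw [dlt_five]; rfl
    simp [SRTM.val, happ]

lemma val_succ {c : (condProdMachine R A).Config} {t : CPT R A}
    (h : dlt c.1 ((c.2.1 c.2.2).1) = some t) (n : ℕ) :
    (condProdMachine R A).val (n + 1) c
      = (condProdMachine R A).wt t c
        * (condProdMachine R A).val n ((condProdMachine R A).stepTo t c) := by
  have happ : (condProdMachine R A).applicable c = {t} := by
    rw [applicable_eq, h]; rfl
  rw [show (n + 1) = n.succ from rfl]
  rw [SRTM.val, happ]; erw [if_neg (Set.singleton_ne_empty t), finsum_mem_singleton]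

/-- `Reaches c c' k w`: the deterministic run goes from `c` to `c'` in exactly `k`
steps, not visiting the final state before, and multiplying weights to `w`. -/
def Reaches (c c' : (condProdMachine R A).Config) (k : ℕ) (w : R) : Prop :=
  cpStep^[k] c = c' ∧ (∀ j < k, (cpStep^[j] c).1 ≠ (5 : Fin 6)) ∧
    ∀ n, (condProdMachine R A).val (n + k) c = w * (condProdMachine R A).val n c'

lemma reach_refl (c : (condProdMachine R A).Config) : Reaches c c 0 1 :=
  ⟨rfl, fun j hj => absurd hj (by omega), fun n => by simp⟩

lemma Reaches.trans {c₁ c₂ c₃ : (condProdMachine R A).Config} {k k' : ℕ} {w w' : R}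
    (h : Reaches c₁ c₂ k w) (h' : Reaches c₂ c₃ k' w') :
    Reaches c₁ c₃ (k + k') (w * w') := by
  obtain ⟨hit, hst, hval⟩ := h
  obtain ⟨hit', hst', hval'⟩ := h'
  refine ⟨?_, ?_, ?_⟩
  · rw [Nat.add_comm, Function.iterate_add_apply, hit, hit']
  · intro j hj
    by_cases hjk : j < k
    · exact hst j hjk
    · rw [show j = (j - k) + k by omega, Function.iterate_add_apply, hit]
      exact hst' _ (by omega)
  · intro n
    rw [show n + (k + k') = (n + k') + k by omega, hval, hval', mul_assoc]

lemma reach_fin {c cf : (condProdMachine R A).Config} {k : ℕ} {w : R}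
    (h : Reaches c cf k w) (h5 : cf.1 = (5 : Fin 6)) (n : ℕ) :
    (condProdMachine R A).val (n + k) c = w := by
  rw [h.2.2 n, val_fin h5, mul_one]

lemma reach_one {c : (condProdMachine R A).Config} {t : CPT R A}
    (h : dlt c.1 ((c.2.1 c.2.2).1) = some t) :
    Reaches c ((condProdMachine R A).stepTo t c) 1 ((condProdMachine R A).wt t c) := by
  refine ⟨by simp [cpStep, h], ?_, fun n => val_succ h n⟩
  intro j hj h5
  simp only [show j = 0 from by omega, Function.iterate_zero_apply] at h5
  rw [h5] at h; erw [dlt_five] at h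
  exact nomatch h

/-- Tape made from a list; cells beyond the list are blank with value 0. -/
def tp (L : List (Pr R A)) : ℕ → Pr R A := fun i => L.getD i (Sum.inr 0, 0)

lemma tp_at (P : List (Pr R A)) (x : Pr R A) (Q : List (Pr R A)) :
    tp (P ++ x :: Q) P.length = x := by
  simp [tp, List.getD_eq_getElem?_getD, List.getElem?_append_right (le_refl P.length)]

lemma tp_ge (L : List (Pr R A)) {i : ℕ} (h : L.length ≤ i) : tp L i = (Sum.inr 0, 0) := by
  simp [tp, List.getD_eq_getElem?_getD, List.getElem?_eq_none h]

lemma tp_set (P : List (Pr R A)) (x : Pr R A) (Q : List (Pr R A)) (v : Pr R A) :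
    Function.update (tp (P ++ x :: Q)) P.length v = tp (P ++ v :: Q) := by
  funext i
  rcases lt_trichotomy i P.length with h | h | h
  · rw [Function.update_of_ne (by omega)]
    simp [tp, List.getD_eq_getElem?_getD, List.getElem?_append_left h]
  · subst h; rw [Function.update_self, tp_at]
  · rw [Function.update_of_ne (by omega)]
    obtain ⟨j, rfl⟩ : ∃ j, i = P.length + (j + 1) := ⟨i - P.length - 1, by omega⟩
    simp [tp, List.getD_eq_getElem?_getD,
      List.getElem?_append_right (show P.length ≤ P.length + (j + 1) by omega)]

lemma tp_blank_at (P m Q : List (Pr R A)) (hQ : ∀ x ∈ Q, x.1 = Sum.inr 0) :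
    ∃ v, tp (P ++ m ++ Q) (P.length + m.length) = (Sum.inr 0, v) := by
  cases Q with
  | nil => exact ⟨0, by rw [List.append_nil]; exact tp_ge _ (by simp)⟩
  | cons y Q' =>
    refine ⟨y.2, ?_⟩
    have h2 := tp_at (P ++ m) y Q'
    rw [List.length_append] at h2
    rw [h2]
    obtain ⟨y1, y2⟩ := y
    exact Prod.ext (hQ (y1, y2) (by simp)) rfl

lemma tp_blank_last (P rest : List (Pr R A)) (hP : ∀ x ∈ P, x.1 = Sum.inr 0)
    (h1 : 1 ≤ P.length) :
    ∃ v, tp (P ++ rest) (P.length - 1) = (Sum.inr 0, v) := by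
  rcases List.eq_nil_or_concat P with rfl | ⟨P', z, rfl⟩
  · simp at h1
  · refine ⟨z.2, ?_⟩
    simp only [List.concat_eq_append] at hP h1 ⊢
    have he : (P' ++ [z]) ++ rest = P' ++ z :: rest := by simp
    rw [he, show (P' ++ [z]).length - 1 = P'.length by simp, tp_at]
    obtain ⟨z1, z2⟩ := z
    exact Prod.ext (hP (z1, z2) (by simp)) rfl

lemma reach_step {q : Fin 6} {L : List (Pr R A)} {p : ℕ} {t : CPT R A}
    {T' : ℕ → Pr R A} {p' : ℕ}
    (hd : dlt q ((tp L p).1) = some t)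
    (hT : Function.update (tp (R := R) (A := A) L) p (t.2.1.2, (tp L p).2) = T')
    (hp : ((p : ℤ) + (if t.2.2.1 then 1 else -1)).natAbs = p') :
    Reaches (⟨q, tp L, p⟩ : (condProdMachine R A).Config) ⟨t.2.1.1, T', p'⟩ 1
      (t.2.2.2.getD (tp L p).2) := by
  have h := reach_one (c := ⟨q, tp L, p⟩) hd
  have hst : (condProdMachine R A).stepTo t ⟨q, tp L, p⟩ = ⟨t.2.1.1, T', p'⟩ := by
    unfold SRTM.stepTo
    show (⟨t.2.1.1, Function.update (tp L) p (t.2.1.2, (tp L p).2),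
      ((p : ℤ) + (if t.2.2.1 then 1 else -1)).natAbs⟩ : (condProdMachine R A).Config) = _
    erw [hT, hp]
  rw [hst] at h
  exact h


lemma step_right {L : List (Pr R A)} {p : ℕ} (h : (tp (R := R) (A := A) L p).1 ≠ Sum.inr 0) :
    Reaches (⟨(1 : Fin 6), tp L, p⟩ : (condProdMachine R A).Config) ⟨(1 : Fin 6), tp L, p + 1⟩ 1 1 := by
  rcases hx : (tp L p).1 with a | k
  · have h1 := reach_step (q := 1) (t := cpLetter R A 1 a) (T' := tp L) (p' := p + 1)
      (by rw [hx]; rfl) ?_ ?_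
    · exact h1
    · show Function.update (tp L) p (Sum.inl a, (tp L p).2) = tp L
      rw [show ((Sum.inl a : A ⊕ Fin 2), (tp L p).2) = tp L p from Prod.ext hx.symm rfl]
      exact Function.update_eq_self p (tp L)
    · show ((p : ℤ) + 1).natAbs = p + 1
      omega
  · fin_cases k
    · exact absurd hx h
    · have h1 := reach_step (q := 1) (t := cpConst R A 2) (T' := tp L) (p' := p + 1)
        (by rw [hx]; rfl) ?_ ?_
      · exact h1
      · show Function.update (tp L) p (Sum.inr 1, (tp L p).2) = tp L
        rw [show ((Sum.inr 1 : A ⊕ Fin 2), (tp L p).2) = tp L p from Prod.ext hx.symm rfl]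
        exact Function.update_eq_self p (tp L)
      · show ((p : ℤ) + 1).natAbs = p + 1
        omega

lemma step_left {L : List (Pr R A)} {p : ℕ} (h : (tp (R := R) (A := A) L p).1 ≠ Sum.inr 0)
    (hp : 1 ≤ p) :
    Reaches (⟨(2 : Fin 6), tp L, p⟩ : (condProdMachine R A).Config) ⟨(2 : Fin 6), tp L, p - 1⟩ 1 1 := by
  rcases hx : (tp L p).1 with a | k
  · have h1 := reach_step (q := 2) (t := cpLetter R A 3 a) (T' := tp L) (p' := p - 1)
      (by rw [hx]; rfl) ?_ ?_
    · exact h1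
    · show Function.update (tp L) p (Sum.inl a, (tp L p).2) = tp L
      rw [show ((Sum.inl a : A ⊕ Fin 2), (tp L p).2) = tp L p from Prod.ext hx.symm rfl]
      exact Function.update_eq_self p (tp L)
    · show ((p : ℤ) + (-1)).natAbs = p - 1
      omega
  · fin_cases k
    · exact absurd hx h
    · have h1 := reach_step (q := 2) (t := cpConst R A 6) (T' := tp L) (p' := p - 1)
        (by rw [hx]; rfl) ?_ ?_
      · exact h1
      · show Function.update (tp L) p (Sum.inr 1, (tp L p).2) = tp L
        rw [show ((Sum.inr 1 : A ⊕ Fin 2), (tp L p).2) = tp L p from Prod.ext hx.symm rfl]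
        exact Function.update_eq_self p (tp L)
      · show ((p : ℤ) + (-1)).natAbs = p - 1
        omega

lemma rscan : ∀ (m P Q : List (Pr R A)), (∀ x ∈ m, x.1 ≠ Sum.inr 0) →
    Reaches (⟨(1 : Fin 6), tp (P ++ m ++ Q), P.length⟩ : (condProdMachine R A).Config)
      ⟨(1 : Fin 6), tp (P ++ m ++ Q), P.length + m.length⟩ m.length 1 := by
  intro m
  induction m with
  | nil => intro P Q _; simpa using reach_refl _
  | cons x m ih =>
    intro P Q hm
    have hcell : tp (R := R) (A := A) (P ++ (x :: m) ++ Q) P.length = x := by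
      rw [show P ++ (x :: m) ++ Q = P ++ x :: (m ++ Q) from by simp]
      exact tp_at P x (m ++ Q)
    have h1 : Reaches (⟨(1 : Fin 6), tp (P ++ (x :: m) ++ Q), P.length⟩ : (condProdMachine R A).Config)
        ⟨(1 : Fin 6), tp (P ++ (x :: m) ++ Q), P.length + 1⟩ 1 1 :=
      step_right (by rw [hcell]; exact hm x (List.mem_cons_self))
    have h2 := ih (P ++ [x]) Q (fun y hy => hm y (List.mem_cons_of_mem _ hy))
    rw [show (P ++ [x]) ++ m ++ Q = P ++ (x :: m) ++ Q from by simp,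
        show (P ++ [x]).length = P.length + 1 from by simp] at h2
    have h3 := h1.trans h2
    rw [show P.length + 1 + m.length = P.length + (m.length + 1) from by omega,
        Nat.add_comm 1 m.length, one_mul] at h3
    exact h3

lemma lscan : ∀ (m P Q : List (Pr R A)), 1 ≤ P.length → (∀ x ∈ m, x.1 ≠ Sum.inr 0) →
    Reaches (⟨(2 : Fin 6), tp (P ++ m ++ Q), P.length + m.length - 1⟩ : (condProdMachine R A).Config)
      ⟨(2 : Fin 6), tp (P ++ m ++ Q), P.length - 1⟩ m.length 1 := by
  intro m
  induction m using List.reverseRecOn with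
  | nil => intro P Q hP _; simpa using reach_refl _
  | append_singleton m x ih =>
    intro P Q hP hm
    have hcell : tp (R := R) (A := A) (P ++ (m ++ [x]) ++ Q) (P.length + m.length) = x := by
      rw [show P ++ (m ++ [x]) ++ Q = (P ++ m) ++ x :: Q from by simp,
          show P.length + m.length = (P ++ m).length from by simp]
      exact tp_at _ x Q
    have h1 : Reaches
        (⟨(2 : Fin 6), tp (P ++ (m ++ [x]) ++ Q), P.length + m.length⟩ : (condProdMachine R A).Config)
        ⟨(2 : Fin 6), tp (P ++ (m ++ [x]) ++ Q), P.length + m.length - 1⟩ 1 1 :=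
      step_left (by rw [hcell]; exact hm x (by simp)) (by omega)
    have h2 := ih P (x :: Q) hP (fun y hy => hm y (by simp [hy]))
    rw [show P ++ m ++ (x :: Q) = P ++ (m ++ [x]) ++ Q from by simp] at h2
    have h3 := h1.trans h2
    rw [one_mul] at h3
    simp only [List.length_append, List.length_cons, List.length_nil] at h3 ⊢
    rw [show P.length + (m.length + (0 + 1)) - 1 = P.length + m.length from by omega,
        show m.length + (0 + 1) = 1 + m.length from by omega]
    exact h3


open Classical in
/-- The value of the "middle portion" of the tape: if it consists of a block of
letters followed by a one-longer block of placeholders, the product of the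
placeholder values, else 0. -/
noncomputable def gfun (m : List (Pr R A)) : R :=
  letI := Classical.propDecidable
  if (∀ x ∈ m.dropWhile (fun y => y.1.isLeft), x.1 = (Sum.inr 1 : A ⊕ Fin 2))
      ∧ (m.dropWhile (fun y => y.1.isLeft)).length
        = (m.takeWhile (fun y => y.1.isLeft)).length + 1
  then ((m.dropWhile (fun y => y.1.isLeft)).map Prod.snd).prod else 0

lemma g_nil : gfun ([] : List (Pr R A)) = 0 := by
  rw [gfun, if_neg]
  rintro ⟨-, h2⟩
  simp at h2

lemma g_single (r : R) : gfun [((Sum.inr 1 : A ⊕ Fin 2), r)] = r := by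
  rw [gfun, if_pos]
  · simp
  · constructor
    · intro x hx
      simp [List.dropWhile] at hx
      rw [hx]
    · simp [List.dropWhile, List.takeWhile]

lemma g_last_inl (m : List (Pr R A)) (a : A) (v : R) : gfun (m ++ [(Sum.inl a, v)]) = 0 := by
  rw [gfun, if_neg]
  rintro ⟨h1, h2⟩
  rw [List.dropWhile_append] at h1 h2
  by_cases hd : (m.dropWhile (fun y => y.1.isLeft)).isEmpty
  · rw [if_pos hd] at h2
    simp [List.dropWhile] at h2
  · rw [if_neg hd] at h1
    have := h1 (Sum.inl a, v) (by simp)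
    simp at this

lemma g_head_X (v : R) (l : List (Pr R A)) (hl : l ≠ []) :
    gfun (((Sum.inr 1 : A ⊕ Fin 2), v) :: l) = 0 := by
  rw [gfun, if_neg]
  rintro ⟨-, h2⟩
  rw [List.dropWhile_cons_of_neg (by simp), List.takeWhile_cons_of_neg (by simp)] at h2
  simp at h2
  exact hl h2

lemma g_step (a : A) (yv : R) (m : List (Pr R A)) (xv : R) :
    gfun ((Sum.inl a, yv) :: (m ++ [((Sum.inr 1 : A ⊕ Fin 2), xv)])) = xv * gfun m := by
  rcases Classical.em (∀ x ∈ m, (fun y : Pr R A => y.1.isLeft) x = true) with hall | hall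
  · have hd : List.dropWhile (fun y => y.1.isLeft) m = [] := List.dropWhile_eq_nil_iff.mpr hall
    rw [gfun, gfun, List.dropWhile_cons_of_pos (by simp), List.takeWhile_cons_of_pos (by simp),
      List.dropWhile_append_of_pos hall, List.takeWhile_append_of_pos hall,
      List.dropWhile_cons_of_neg (by simp), List.takeWhile_cons_of_neg (by simp)]
    rw [if_neg (by rintro ⟨-, h2⟩; simp at h2), if_neg (by rintro ⟨-, h2⟩; rw [hd] at h2; simp at h2),
      mul_zero]
  · have hne : List.dropWhile (fun y => y.1.isLeft) m ≠ [] :=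
      fun h => hall (List.dropWhile_eq_nil_iff.mp h)
    have htk : ¬ (List.takeWhile (fun y : Pr R A => y.1.isLeft) m).length = m.length := by
      intro h
      exact hall (List.takeWhile_eq_self_iff.mp ((List.takeWhile_prefix _).eq_of_length h))
    rw [gfun, gfun, List.dropWhile_cons_of_pos (by simp), List.takeWhile_cons_of_pos (by simp),
      List.dropWhile_append, List.takeWhile_append,
      if_neg (c := (List.dropWhile (fun y : Pr R A => y.1.isLeft) m).isEmpty = true)
        (by simpa using hne),
      if_neg (c := (List.takeWhile (fun y : Pr R A => y.1.isLeft) m).length = m.length) htk]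
    rcases Classical.em ((∀ x ∈ List.dropWhile (fun y : Pr R A => y.1.isLeft) m,
        x.1 = (Sum.inr 1 : A ⊕ Fin 2))
        ∧ (List.dropWhile (fun y : Pr R A => y.1.isLeft) m).length
          = (List.takeWhile (fun y : Pr R A => y.1.isLeft) m).length + 1) with hc | hc
    · rw [if_pos ?_, if_pos hc]
      · rw [List.map_append, List.prod_append]
        simp [mul_comm]
      · constructor
        · intro x hx
          rcases List.mem_append.mp hx with h | h
          · exact hc.1 x h
          · simp at h; rw [h]
        · simp only [List.length_append, List.length_cons, List.length_singleton,
            List.length_nil]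
          omega
          
    · rw [if_neg ?_, if_neg hc, mul_zero]
      intro hcc
      apply hc
      constructor
      · intro x hx; exact hcc.1 x (List.mem_append.mpr (Or.inl hx))
      · have := hcc.2
        simp only [List.length_append, List.length_cons, List.length_singleton,
          List.length_nil] at this
        omega


lemma reach_wcongr {c c' : (condProdMachine R A).Config} {k : ℕ} {w w' : R}
    (h : Reaches c c' k w) (e : w = w') : Reaches c c' k w' := e ▸ h

lemma reach_step' {q : Fin 6} {L : List (Pr R A)} {p : ℕ} {t : CPT R A}
    (hd : dlt q ((tp L p).1) = some t) :
    Reaches (⟨q, tp L, p⟩ : (condProdMachine R A).Config)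
      ((condProdMachine R A).stepTo t ⟨q, tp L, p⟩) 1 (t.2.2.2.getD (tp L p).2) :=
  reach_one hd

lemma main_nil (P Q : List (Pr R A)) (hP1 : 1 ≤ P.length)
    (hP : ∀ x ∈ P, x.1 = (Sum.inr 0 : A ⊕ Fin 2))
    (hQ : ∀ x ∈ Q, x.1 = (Sum.inr 0 : A ⊕ Fin 2)) :
    ∃ cf : (condProdMachine R A).Config,
      Reaches (⟨(1 : Fin 6), tp (P ++ Q), P.length⟩ : (condProdMachine R A).Config)
        cf 2 (0 : R) ∧ cf.1 = (5 : Fin 6) := by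
  obtain ⟨v, hv⟩ := tp_blank_at P [] Q hQ
  simp only [List.append_nil, List.length_nil, Nat.add_zero] at hv
  -- step 1 : state 1 reads blank, turn left into state 3
  have h1 := reach_step (q := 1) (L := P ++ Q) (p := P.length) (t := cpConst R A 3)
    (T' := tp (P ++ Q)) (p' := P.length - 1) (by rw [hv]; rfl) ?_ ?_
  · -- step 2 : state 3 reads blank (inside P), finish with weight 0
    obtain ⟨v2, hv2⟩ := tp_blank_last P Q hP hP1
    have h2 := reach_step' (q := 3) (L := P ++ Q) (p := P.length - 1)
      (t := cpConst R A 5) (by rw [hv2]; rfl)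
    refine ⟨_, reach_wcongr (h1.trans h2) ?_, rfl⟩
    show (1 : R) * 0 = 0
    exact mul_zero 1
  · show Function.update (tp (P ++ Q)) P.length
      ((Sum.inr 0 : A ⊕ Fin 2), (tp (P ++ Q) P.length).2) = tp (P ++ Q)
    rw [show ((Sum.inr 0 : A ⊕ Fin 2), (tp (P ++ Q) P.length).2) = tp (P ++ Q) P.length
      from Prod.ext (by rw [hv]) rfl]
    exact Function.update_eq_self _ _
  · show ((P.length : ℤ) + (-1)).natAbs = P.length - 1
    omega


lemma main_loop : ∀ (N : ℕ) (m P Q : List (Pr R A)),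
    m.length ≤ N → 1 ≤ P.length →
    (∀ x ∈ P, x.1 = (Sum.inr 0 : A ⊕ Fin 2)) →
    (∀ x ∈ Q, x.1 = (Sum.inr 0 : A ⊕ Fin 2)) →
    (∀ x ∈ m, x.1 ≠ (Sum.inr 0 : A ⊕ Fin 2)) →
    ∃ K ≤ (m.length + 2)^2, ∃ cf : (condProdMachine R A).Config,
      Reaches (⟨(1 : Fin 6), tp (P ++ m ++ Q), P.length⟩ : (condProdMachine R A).Config)
        cf K (gfun m) ∧ cf.1 = (5 : Fin 6) := by
  intro N
  induction N with
  | zero =>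
    intro m P Q hmN hP1 hP hQ hm
    have hm0 : m = [] := List.length_eq_zero_iff.mp (by omega)
    subst hm0
    obtain ⟨cf, hr, h5⟩ := main_nil P Q hP1 hP hQ
    refine ⟨2, by norm_num, cf, ?_, h5⟩
    rw [show P ++ ([] : List (Pr R A)) ++ Q = P ++ Q from by simp, g_nil]
    exact hr
  | succ N ih =>
    intro m P Q hmN hP1 hP hQ hm
    rcases List.eq_nil_or_concat m with rfl | ⟨m', x, rfl⟩
    · obtain ⟨cf, hr, h5⟩ := main_nil P Q hP1 hP hQ
      refine ⟨2, by norm_num, cf, ?_, h5⟩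
      rw [show P ++ ([] : List (Pr R A)) ++ Q = P ++ Q from by simp, g_nil]
      exact hr
    · simp only [List.concat_eq_append] at hmN hm ⊢
      obtain ⟨xs, xv⟩ := x
      -- Phase 1: scan right over m
      have h1 := rscan (m' ++ [(xs, xv)]) P Q hm
      -- Phase 2: turn left
      obtain ⟨v, hv⟩ := tp_blank_at P (m' ++ [(xs, xv)]) Q hQ
      have h2 := reach_step (q := 1) (L := P ++ (m' ++ [(xs, xv)]) ++ Q)
        (p := P.length + (m' ++ [(xs, xv)]).length) (t := cpConst R A 3)
        (T' := tp (P ++ (m' ++ [(xs, xv)]) ++ Q)) (p' := P.length + m'.length)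
        (by rw [hv]; rfl) ?_ ?_
      rotate_left
      · show Function.update (tp (P ++ (m' ++ [(xs, xv)]) ++ Q))
            (P.length + (m' ++ [(xs, xv)]).length)
            ((Sum.inr 0 : A ⊕ Fin 2),
              (tp (P ++ (m' ++ [(xs, xv)]) ++ Q) (P.length + (m' ++ [(xs, xv)]).length)).2)
          = tp (P ++ (m' ++ [(xs, xv)]) ++ Q)
        rw [show ((Sum.inr 0 : A ⊕ Fin 2),
              (tp (P ++ (m' ++ [(xs, xv)]) ++ Q) (P.length + (m' ++ [(xs, xv)]).length)).2)
            = tp (P ++ (m' ++ [(xs, xv)]) ++ Q) (P.length + (m' ++ [(xs, xv)]).length)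
          from Prod.ext (by rw [hv]) rfl]
        exact Function.update_eq_self _ _
      · show (((P.length + (m' ++ [(xs, xv)]).length : ℕ) : ℤ) + (-1)).natAbs
          = P.length + m'.length
        simp only [List.length_append, List.length_cons, List.length_nil]
        omega
      have h12 := h1.trans h2
      have hcx : tp (P ++ (m' ++ [(xs, xv)]) ++ Q) (P.length + m'.length) = (xs, xv) := by
        rw [show P ++ (m' ++ [(xs, xv)]) ++ Q = (P ++ m') ++ (xs, xv) :: Q from by simp,
            show P.length + m'.length = (P ++ m').length from by simp]
        exact tp_at _ _ _
      rcases xs with xa | xk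
      · -- the rightmost symbol of m is a letter : finish with weight 0
        have h3 := reach_step' (q := 3) (L := P ++ (m' ++ [(Sum.inl xa, xv)]) ++ Q)
          (p := P.length + m'.length) (t := cpLetter R A 2 xa) (by rw [hcx]; rfl)
        refine ⟨_, ?_, _, reach_wcongr (h12.trans h3) ?_, rfl⟩
        · simp only [List.length_append, List.length_cons, List.length_nil]
          exact le_trans (by omega) (Nat.le_self_pow (by norm_num) _)
        · show (1 : R) * 1 * 0 = gfun (m' ++ [(Sum.inl xa, xv)])
          rw [g_last_inl]
          norm_num
      · rcases eq_or_ne xk 0 with hxk | hxk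
        · subst hxk
          exact (hm _ (List.mem_append_right _ (List.mem_cons_self)) rfl).elim
        · have hxk1 : xk = 1 := by
            fin_cases xk
            · exact absurd rfl hxk
            · rfl
          subst hxk1
          -- the rightmost symbol is X : erase it, collect its weight, move left
          have h3 := reach_step (q := 3) (L := P ++ (m' ++ [((Sum.inr 1 : A ⊕ Fin 2), xv)]) ++ Q)
            (p := P.length + m'.length) (t := cpConst R A 4)
            (T' := tp (P ++ m' ++ (((Sum.inr 0 : A ⊕ Fin 2), xv) :: Q)))
            (p' := P.length + m'.length - 1)
            (by rw [hcx]; rfl) ?_ ?_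
          rotate_left
          · rw [hcx]
            rw [show P ++ (m' ++ [((Sum.inr 1 : A ⊕ Fin 2), xv)]) ++ Q
                = (P ++ m') ++ ((Sum.inr 1 : A ⊕ Fin 2), xv) :: Q from by simp,
              show P.length + m'.length = (P ++ m').length from by simp, tp_set]
            exact congrArg tp
              (by simp [show (cpConst R A 4).2.1.2 = (Sum.inr 0 : A ⊕ Fin 2) from rfl])
          · show (((P.length + m'.length : ℕ) : ℤ) + (-1)).natAbs = P.length + m'.length - 1
            omega
          have h123 := h12.trans h3
          rcases m' with _ | ⟨⟨ys, yv⟩, m''⟩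
          · -- m = [X] : the loop terminates with value xv
            simp only [List.nil_append, List.append_nil, List.length_nil, Nat.add_zero] at h123 hcx
            obtain ⟨v2, hv2⟩ := tp_blank_last P (((Sum.inr 0 : A ⊕ Fin 2), xv) :: Q) hP hP1
            have h4 := reach_step (q := 2) (L := P ++ ((Sum.inr 0 : A ⊕ Fin 2), xv) :: Q)
              (p := P.length - 1) (t := cpConst R A 7)
              (T' := tp (P ++ ((Sum.inr 0 : A ⊕ Fin 2), xv) :: Q)) (p' := P.length)
              (by rw [hv2]; rfl) ?_ ?_
            rotate_left
            · show Function.update (tp (P ++ ((Sum.inr 0 : A ⊕ Fin 2), xv) :: Q)) (P.length - 1)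
                  ((Sum.inr 0 : A ⊕ Fin 2),
                    (tp (P ++ ((Sum.inr 0 : A ⊕ Fin 2), xv) :: Q) (P.length - 1)).2)
                = tp (P ++ ((Sum.inr 0 : A ⊕ Fin 2), xv) :: Q)
              rw [show ((Sum.inr 0 : A ⊕ Fin 2),
                    (tp (P ++ ((Sum.inr 0 : A ⊕ Fin 2), xv) :: Q) (P.length - 1)).2)
                  = tp (P ++ ((Sum.inr 0 : A ⊕ Fin 2), xv) :: Q) (P.length - 1)
                from Prod.ext (by rw [hv2]) rfl]
              exact Function.update_eq_self _ _
            · show (((P.length - 1 : ℕ) : ℤ) + 1).natAbs = P.length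
              omega
            have h5 := reach_step' (q := 4) (L := P ++ ((Sum.inr 0 : A ⊕ Fin 2), xv) :: Q)
              (p := P.length) (t := cpConst R A 9) (by rw [tp_at]; rfl)
            refine ⟨_, by norm_num, _, reach_wcongr ((h123.trans h4).trans h5) ?_, rfl⟩
            rw [show ([] : List (Pr R A)) ++ [((Sum.inr 1 : A ⊕ Fin 2), xv)]
                = [((Sum.inr 1 : A ⊕ Fin 2), xv)] from by simp, g_single]
            simp only [show ∀ z : R, ((cpConst R A 3).2.2.2).getD z = 1 from fun _ => rfl,
              show ∀ z : R, ((cpConst R A 4).2.2.2).getD z = z from fun _ => rfl,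
              show ∀ z : R, ((cpConst R A 7).2.2.2).getD z = 1 from fun _ => rfl,
              show ∀ z : R, ((cpConst R A 9).2.2.2).getD z = 1 from fun _ => rfl,
              one_mul, mul_one]
            rw [hcx]
          · -- m = y :: m'' ++ [X] : scan left, erase the first letter, recurse
            set C : List (Pr R A) := ((Sum.inr 0 : A ⊕ Fin 2), xv) :: Q with hC
            have hls := lscan ((ys, yv) :: m'') P C hP1
              (fun z hz => hm z (List.mem_append_left _ hz))
            obtain ⟨v3, hv3⟩ := tp_blank_last P ((ys, yv) :: m'' ++ C) hP hP1
            rw [← List.append_assoc] at hv3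
            have h4 := reach_step (q := 2) (L := P ++ ((ys, yv) :: m'') ++ C)
              (p := P.length - 1) (t := cpConst R A 7)
              (T' := tp (P ++ ((ys, yv) :: m'') ++ C)) (p' := P.length)
              (by rw [hv3]; rfl) ?_ ?_
            rotate_left
            · show Function.update (tp (P ++ ((ys, yv) :: m'') ++ C)) (P.length - 1)
                  ((Sum.inr 0 : A ⊕ Fin 2),
                    (tp (P ++ ((ys, yv) :: m'') ++ C) (P.length - 1)).2)
                = tp (P ++ ((ys, yv) :: m'') ++ C)
              rw [show ((Sum.inr 0 : A ⊕ Fin 2),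
                    (tp (P ++ ((ys, yv) :: m'') ++ C) (P.length - 1)).2)
                  = tp (P ++ ((ys, yv) :: m'') ++ C) (P.length - 1)
                from Prod.ext (by rw [hv3]) rfl]
              exact Function.update_eq_self _ _
            · show (((P.length - 1 : ℕ) : ℤ) + 1).natAbs = P.length
              omega
            have hcy : tp (P ++ ((ys, yv) :: m'') ++ C) P.length = (ys, yv) := by
              rw [show P ++ ((ys, yv) :: m'') ++ C = P ++ (ys, yv) :: (m'' ++ C) from by simp]
              exact tp_at _ _ _
            rcases ys with ya | yk
            · -- first symbol is a letter : erase it and recurse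
              have h5 := reach_step (q := 4) (L := P ++ ((Sum.inl ya, yv) :: m'') ++ C)
                (p := P.length) (t := cpLetter R A 4 ya)
                (T' := tp ((P ++ [((Sum.inr 0 : A ⊕ Fin 2), yv)]) ++ m'' ++ C))
                (p' := P.length + 1)
                (by rw [hcy]; rfl) ?_ ?_
              rotate_left
              · rw [hcy]
                rw [show P ++ ((Sum.inl ya, yv) :: m'') ++ C
                    = P ++ (Sum.inl ya, yv) :: (m'' ++ C) from by simp, tp_set]
                exact congrArg tp
                  (by simp [show (cpLetter R A 4 ya).2.1.2 = (Sum.inr 0 : A ⊕ Fin 2) from rfl])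
              · show (((P.length : ℕ) : ℤ) + 1).natAbs = P.length + 1
                omega
              obtain ⟨K'', hK'', cf, hrec, h5st⟩ := ih m'' (P ++ [((Sum.inr 0 : A ⊕ Fin 2), yv)]) C
                (by simp only [List.length_append, List.length_cons, List.length_nil] at hmN ⊢
                    omega)
                (by simp)
                (by intro z hz
                    rcases List.mem_append.mp hz with h | h
                    exacts [hP z h, by simp at h; rw [h]])
                (by intro z hz
                    rw [hC] at hz
                    rcases List.mem_cons.mp hz with h | h
                    exacts [by rw [h], hQ z h])
                (fun z hz => hm z (List.mem_append_left _ (List.mem_cons_of_mem _ hz)))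
              rw [show (P ++ [((Sum.inr 0 : A ⊕ Fin 2), yv)]).length = P.length + 1
                from by simp] at hrec
              have hall := ((((h123.trans hls).trans h4).trans h5).trans hrec)
              refine ⟨_, ?_, cf, reach_wcongr hall ?_, h5st⟩
              · simp only [List.length_append, List.length_cons, List.length_nil] at hK'' ⊢
                nlinarith [hK'']
              · simp only [show ∀ z : R, ((cpConst R A 3).2.2.2).getD z = 1 from fun _ => rfl,
                  show ∀ z : R, ((cpConst R A 4).2.2.2).getD z = z from fun _ => rfl,
                  show ∀ z : R, ((cpConst R A 7).2.2.2).getD z = 1 from fun _ => rfl,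
                  show ∀ z : R, ((cpLetter R A 4 ya).2.2.2).getD z = 1 from fun _ => rfl,
                  one_mul, mul_one]
                rw [hcx]
                rw [show ((Sum.inl ya, yv) :: m'') ++ [((Sum.inr 1 : A ⊕ Fin 2), xv)]
                    = (Sum.inl ya, yv) :: (m'' ++ [((Sum.inr 1 : A ⊕ Fin 2), xv)]) from by simp,
                  g_step]
            · rcases eq_or_ne yk 0 with hyk | hyk
              · subst hyk
                exact (hm _ (List.mem_append_left _ (List.mem_cons_self)) rfl).elim
              · have hyk1 : yk = 1 := by
                  fin_cases yk
                  · exact absurd rfl hyk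
                  · rfl
                subst hyk1
                -- first symbol is X : finish with weight 0
                have h5 := reach_step' (q := 4)
                  (L := P ++ (((Sum.inr 1 : A ⊕ Fin 2), yv) :: m'') ++ C)
                  (p := P.length) (t := cpConst R A 8) (by rw [hcy]; rfl)
                have hall := (((h123.trans hls).trans h4).trans h5)
                refine ⟨_, ?_, _, reach_wcongr hall ?_, rfl⟩
                · simp only [List.length_append, List.length_cons, List.length_nil]
                  nlinarith [m''.length]
                · rw [show (((Sum.inr 1 : A ⊕ Fin 2), yv) :: m'')
                      ++ [((Sum.inr 1 : A ⊕ Fin 2), xv)]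
                    = ((Sum.inr 1 : A ⊕ Fin 2), yv)
                      :: (m'' ++ [((Sum.inr 1 : A ⊕ Fin 2), xv)]) from by simp,
                    g_head_X _ _ (by simp)]
                  simp only [show ∀ z : R, ((cpConst R A 3).2.2.2).getD z = 1 from fun _ => rfl,
                    show ∀ z : R, ((cpConst R A 4).2.2.2).getD z = z from fun _ => rfl,
                    show ∀ z : R, ((cpConst R A 7).2.2.2).getD z = 1 from fun _ => rfl,
                    show ∀ z : R, ((cpConst R A 8).2.2.2).getD z = 0 from fun _ => rfl,
                    one_mul, mul_one, mul_zero]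


/-- Embedding of input letters into tape cells. -/
def emb : (A ⊕ R) → Pr R A := fun e =>
  match e with
  | Sum.inl a => (Sum.inl a, 0)
  | Sum.inr r => ((Sum.inr 1 : A ⊕ Fin 2), r)

lemma emb_inl (a : A) : emb (R := R) (Sum.inl a) = ((Sum.inl a : A ⊕ Fin 2), (0 : R)) := rfl

lemma emb_inr (r : R) : emb (A := A) (Sum.inr r) = ((Sum.inr 1 : A ⊕ Fin 2), r) := rfl

lemma initTape_eq (s : List (A ⊕ R)) :
    (condProdMachine R A).initTape s = tp (s.map emb) := by
  funext i
  unfold SRTM.initTape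
  rcases h : s[i]? with _ | (a | r) <;>
    simp [h, tp, List.getD_eq_getElem?_getD, List.getElem?_map, emb, condProdMachine]

lemma condProd_nil : condProd ([] : List (A ⊕ R)) = 1 := by
  unfold condProd
  rw [if_pos ⟨[], [], rfl, rfl⟩]
  simp

lemma condProd_inr (r : R) (t : List (A ⊕ R)) : condProd (Sum.inr r :: t) = 0 := by
  unfold condProd
  rw [if_neg]
  rintro ⟨as, rs, h, hl⟩
  rcases as with _ | ⟨a', as'⟩
  · rcases rs with _ | ⟨r', rs'⟩
    · simp at h
    · simp at hl
  · simp at h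

lemma all_left_eq (l : List (A ⊕ R)) (h : ∀ e ∈ l, e.isLeft = true) :
    ∃ as : List A, l = as.map Sum.inl := by
  induction l with
  | nil => exact ⟨[], rfl⟩
  | cons e t ih =>
    obtain ⟨as, has⟩ := ih (fun x hx => h x (List.mem_cons_of_mem _ hx))
    rcases e with a | r
    · exact ⟨a :: as, by rw [List.map_cons, ← has]⟩
    · exact absurd (h (Sum.inr r) (List.mem_cons_self)) (by simp)

lemma all_right_eq (l : List (A ⊕ R)) (h : ∀ e ∈ l, e.isRight = true) :
    ∃ rs : List R, l = rs.map Sum.inr := by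
  induction l with
  | nil => exact ⟨[], rfl⟩
  | cons e t ih =>
    obtain ⟨rs, hrs⟩ := ih (fun x hx => h x (List.mem_cons_of_mem _ hx))
    rcases e with a | r
    · exact absurd (h (Sum.inl a) (List.mem_cons_self)) (by simp)
    · exact ⟨r :: rs, by rw [List.map_cons, ← hrs]⟩

lemma pick_block (as : List A) (rs : List R) :
    (List.filterMap (fun e : A ⊕ R => match e with | Sum.inl _ => none | Sum.inr r => some r)
      (as.map Sum.inl ++ rs.map Sum.inr)) = rs := by
  induction as with
  | nil =>
    simp only [List.map_nil, List.nil_append]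
    induction rs with
    | nil => rfl
    | cons r rs ih => simpa [List.filterMap_cons] using ih
  | cons a as ih => simpa [List.filterMap_cons] using ih

lemma emb_snd_block (rs : List R) :
    (((rs.map (Sum.inr : R → A ⊕ R)).map emb).map Prod.snd) = rs := by
  induction rs with
  | nil => rfl
  | cons r rs ih => simp only [List.map_cons, ih]; rfl

lemma condProd_link (a : A) (t : List (A ⊕ R)) :
    condProd (Sum.inl a :: t) = gfun (t.map emb) := by
  have hcomp : ((fun y : Pr R A => y.1.isLeft) ∘ emb) = (Sum.isLeft : A ⊕ R → Bool) := by
    funext e; rcases e with a' | r <;> rfl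
  unfold gfun
  rw [List.dropWhile_map, List.takeWhile_map, hcomp]
  rcases Classical.em ((∀ e ∈ t.dropWhile Sum.isLeft, e.isRight = true)
      ∧ (t.dropWhile Sum.isLeft).length = (t.takeWhile Sum.isLeft).length + 1) with hc | hc
  · obtain ⟨rs, hrs⟩ := all_right_eq _ hc.1
    obtain ⟨as, has⟩ := all_left_eq (t.takeWhile Sum.isLeft)
      (fun x hx => List.mem_takeWhile_imp hx)
    have ht : t = t.takeWhile Sum.isLeft ++ t.dropWhile Sum.isLeft :=
      (List.takeWhile_append_dropWhile).symm
    rw [if_pos ?_]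
    rotate_left
    · constructor
      · intro x hx
        obtain ⟨e, he, rfl⟩ := List.mem_map.mp hx
        have := hc.1 e he
        rcases e with a' | r
        · simp at this
        · rfl
      · simp [hc.2]
    · have hsplit' : Sum.inl a :: t = (a :: as).map Sum.inl ++ rs.map Sum.inr := by
        rw [show Sum.inl a :: t
            = Sum.inl a :: (t.takeWhile Sum.isLeft ++ t.dropWhile Sum.isLeft) from by
              rw [List.takeWhile_append_dropWhile], has, hrs]
        rfl
      have hlen' : (a :: as).length = rs.length := by
        have h2 := hc.2
        rw [has, hrs] at h2
        simp only [List.length_map] at h2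
        simp [h2]
      unfold condProd
      rw [if_pos ⟨a :: as, rs, hsplit', hlen'⟩, hsplit', pick_block, hrs, emb_snd_block]
  · rw [if_neg ?_]
    rotate_left
    · rintro ⟨h1, h2⟩
      apply hc
      constructor
      · intro e he
        have := h1 (emb e) (List.mem_map_of_mem he)
        rcases e with a' | r
        · simp [emb] at this
        · rfl
      · simpa using h2
    · unfold condProd
      rw [if_neg]
      rintro ⟨as, rs, hsplit, hlen⟩
      apply hc
      rcases as with _ | ⟨a', as'⟩
      · rcases rs with _ | ⟨r', rs'⟩
        · simp at hsplit
        · simp at hsplit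
      · simp only [List.map_cons, List.cons_append, List.cons.injEq] at hsplit
        obtain ⟨-, ht⟩ := hsplit
        rcases rs with _ | ⟨r', rs'⟩
        · simp at hlen
        · have hdw : t.dropWhile Sum.isLeft = (r' :: rs').map Sum.inr := by
            rw [ht, List.dropWhile_append_of_pos (by simp)]
            rw [List.map_cons]
            rw [List.dropWhile_cons_of_neg (by simp)]
          have htw : t.takeWhile Sum.isLeft = as'.map Sum.inl := by
            rw [ht, List.takeWhile_append_of_pos (by simp)]
            rw [List.map_cons]
            rw [List.takeWhile_cons_of_neg (by simp)]
            simp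
          constructor
          · intro e he
            rw [hdw] at he
            obtain ⟨r'', -, rfl⟩ := List.mem_map.mp he
            rfl
          · rw [hdw, htw]
            simp only [List.length_map, List.length_cons] at hlen ⊢
            omega


lemma init_reach (s : List (A ⊕ R)) :
    ∃ K ≤ (s.length + 2)^2 + 2,
      ∃ cf : (condProdMachine R A).Config,
        Reaches ((condProdMachine R A).initConfig s) cf K (condProd s)
          ∧ cf.1 = (5 : Fin 6) := by
  have hic : (condProdMachine R A).initConfig s
      = (⟨(0 : Fin 6), tp (s.map emb), 0⟩ : (condProdMachine R A).Config) := by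
    rw [SRTM.initConfig, initTape_eq]
    rfl
  rw [hic]
  rcases s with _ | ⟨e, t⟩
  · simp only [List.map_nil]
    have h1 := reach_step' (q := 0) (L := ([] : List (Pr R A))) (p := 0)
      (t := cpConst R A 1) (by rfl)
    refine ⟨1, by norm_num, _, reach_wcongr h1 ?_, rfl⟩
    rw [condProd_nil]
    rfl
  · rcases e with a | r
    · simp only [List.map_cons, emb_inl]
      have h1 := reach_step (q := 0) (L := ((Sum.inl a : A ⊕ Fin 2), (0 : R)) :: t.map emb)
        (p := 0) (t := cpLetter R A 0 a)
        (T' := tp (((Sum.inr 0 : A ⊕ Fin 2), (0 : R)) :: t.map emb)) (p' := 1)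
        (by rfl) ?_ ?_
      rotate_left
      · have h := tp_set ([] : List (Pr R A)) ((Sum.inl a : A ⊕ Fin 2), (0 : R)) (t.map emb)
          ((cpLetter R A 0 a).2.1.2,
            (tp (((Sum.inl a : A ⊕ Fin 2), (0 : R)) :: t.map emb) 0).2)
        simp only [List.nil_append, List.length_nil] at h
        rw [h]
        rfl
      · show ((0 : ℤ) + 1).natAbs = 1
        rfl
      obtain ⟨K, hK, cf, hr, h5⟩ := main_loop (t.map emb).length (t.map emb)
        [((Sum.inr 0 : A ⊕ Fin 2), (0 : R))] [] le_rfl (by simp) (by simp) (by simp)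
        (by intro z hz
            obtain ⟨e, he, rfl⟩ := List.mem_map.mp hz
            rcases e with a' | r' <;> simp [emb])
      simp only [List.append_nil, List.singleton_append, List.length_singleton] at hr
      refine ⟨1 + K, ?_, cf, reach_wcongr (h1.trans hr) ?_, h5⟩
      · simp only [List.length_map] at hK
        simp only [List.length_cons]
        linarith [hK, Nat.pow_le_pow_left (show t.length + 2 ≤ t.length + 1 + 2 by omega) 2]
      · rw [condProd_link]
        show (1 : R) * gfun (t.map emb) = gfun (t.map emb)
        exact one_mul _
    · simp only [List.map_cons, emb_inr]
      have h1 := reach_step' (q := 0) (L := ((Sum.inr 1 : A ⊕ Fin 2), r) :: t.map emb)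
        (p := 0) (t := cpConst R A 0) (by rfl)
      refine ⟨1, le_trans one_le_two (Nat.le_add_left 2 _), _, reach_wcongr h1 ?_, rfl⟩
      rw [condProd_inr]
      rfl

lemma cpStep_fix {c : (condProdMachine R A).Config} (h : c.1 = (5 : Fin 6)) :
    cpStep c = c := by
  unfold cpStep
  rw [h]; erw [dlt_five]

lemma cpStep_fix_iter {c : (condProdMachine R A).Config} (h : c.1 = (5 : Fin 6)) :
    ∀ k, cpStep^[k] c = c
  | 0 => rfl
  | k + 1 => by rw [Function.iterate_succ_apply, cpStep_fix h, cpStep_fix_iter h k]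

lemma dlt_total {q : Fin 6} (hq : q ≠ 5) (s : A ⊕ Fin 2) :
    ∃ t : CPT R A, dlt q s = some t := by
  rcases s with a | k
  · fin_cases q <;> first | exact ⟨_, rfl⟩ | exact absurd rfl hq
  · fin_cases k <;> fin_cases q <;> first | exact ⟨_, rfl⟩ | exact absurd rfl hq

lemma path_imp : ∀ (n : ℕ) (c c' : (condProdMachine R A).Config),
    SRTM.PathLen (condProdMachine R A) n c c' →
    c' = cpStep^[n] c ∧ ∀ k < n, (cpStep^[k] c).1 ≠ (5 : Fin 6) := by
  intro n
  induction n with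
  | zero =>
    intro c c' h
    simp only [SRTM.PathLen] at h
    exact ⟨h, fun k hk => absurd hk (by omega)⟩
  | succ n ih =>
    intro c c' h
    simp only [SRTM.PathLen] at h
    obtain ⟨c₁, ⟨t, ht, rfl⟩, hp⟩ := h
    rw [applicable_eq] at ht
    rcases hd : dlt (R := R) c.1 ((c.2.1 c.2.2).1) with _ | t₀
    · rw [hd] at ht
      exact absurd ht (Set.notMem_empty t)
    · rw [hd] at ht
      have htt : t = t₀ := ht
      subst htt
      have hstep : (condProdMachine R A).stepTo t c = cpStep c := by
        simp [cpStep, hd]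
      rw [hstep] at hp
      obtain ⟨h1, h2⟩ := ih _ _ hp
      refine ⟨by rw [h1, Function.iterate_succ_apply], ?_⟩
      intro k hk
      rcases k with _ | k
      · simp only [Function.iterate_zero_apply]
        intro h5
        rw [h5] at hd; erw [dlt_five] at hd
        exact nomatch hd
      · rw [Function.iterate_succ_apply]
        exact h2 k (by omega)

lemma path_exists : ∀ (K : ℕ) (c : (condProdMachine R A).Config),
    (∀ j < K, (cpStep^[j] c).1 ≠ (5 : Fin 6)) →
    SRTM.PathLen (condProdMachine R A) K c (cpStep^[K] c) := by
  intro K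
  induction K with
  | zero =>
    intro c h
    simp only [SRTM.PathLen, Function.iterate_zero_apply]
  | succ K ih =>
    intro c h
    have h0 : c.1 ≠ (5 : Fin 6) := by simpa using h 0 (by omega)
    obtain ⟨t, hd⟩ := dlt_total (R := R) h0 ((c.2.1 c.2.2).1)
    simp only [SRTM.PathLen]
    refine ⟨cpStep c, ⟨t, ?_, ?_⟩, ?_⟩
    · rw [applicable_eq, hd]
      exact rfl
    · simp [cpStep, hd]
    · have hx := ih (cpStep c) (fun j hj => by
        have hz := h (j + 1) (by omega)
        rwa [Function.iterate_succ_apply] at hz)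
      rwa [Function.iterate_succ_apply]

end CPAux


/-- The machine `condProdMachine` is terminating with polynomially bounded
computation path lengths, and its output is the conditional product function `f_R`. -/
theorem condProdMachine_correct (R A : Type) [CommSemiring R] [Fintype A] :
    (∃ (ℓ : List (A ⊕ R) → ℕ) (p : Polynomial ℕ),
        (condProdMachine R A).BoundedBy ℓ ∧ ∀ s, ℓ s ≤ p.eval s.length) ∧
    (∀ ℓ : List (A ⊕ R) → ℕ, (condProdMachine R A).BoundedBy ℓ →
        ∀ s : List (A ⊕ R), (condProdMachine R A).output ℓ s = condProd s) := by
  constructor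
  · refine ⟨fun s => (s.length + 2)^2 + 2,
      (Polynomial.X + Polynomial.C 2)^2 + Polynomial.C 2, ?_, ?_⟩
    · intro s n c hpath
      obtain ⟨K, hK, cf, hr, h5⟩ := CPAux.init_reach s
      obtain ⟨-, hnot5⟩ := CPAux.path_imp n _ _ hpath
      by_contra hgt
      push_neg at hgt
      have h5K : (CPAux.cpStep^[K] ((condProdMachine R A).initConfig s)).1 = (5 : Fin 6) := by
        rw [hr.1]
        exact h5
      exact hnot5 K (by omega) h5K
    · intro s
      simp
  · intro ℓ hb s
    obtain ⟨K, hK, cf, hr, h5⟩ := CPAux.init_reach s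
    have hpath := CPAux.path_exists K _ hr.2.1
    rw [hr.1] at hpath
    have hKle : K ≤ ℓ s := hb s K _ hpath
    unfold SRTM.output
    rw [show ℓ s = (ℓ s - K) + K from by omega, hr.2.2, CPAux.val_fin h5, mul_one]
end

section
/- Let R be a commutative semiring and let M = (R', Q, Σ_I, Σ, ι, X, ⊔, δ) be a terminating SRTM over R. If an input s ∈ Σ_I* contains no semiring values, then the output ‖M‖(s) lies in the subsemiring of R generated by the finite set R'. Consequently, every function in NP_finite(R) has range contained in a finitely generated subsemiring of R; in particular, if R is not finitely generated as a semiring, then no function in NP_finite(R) is surjective onto R. -/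
open scoped Classical

/-- `NP_finite(R)`: functions on pure alphabet strings (no semiring values in
the input) computed by terminating SRTMs with polynomially bounded path
lengths. -/
def NPfinite (R : Type) [CommSemiring R] (A : Type) [Fintype A]
    (f : List A → R) : Prop :=
  ∃ (M : SRTM R A) (ℓ : List (A ⊕ R) → ℕ) (p : Polynomial ℕ),
    M.BoundedBy ℓ ∧ (∀ s, ℓ s ≤ p.eval s.length) ∧
    ∀ s : List A, f s = M.output ℓ (s.map Sum.inl)

private theorem SRTM_val_mem (R : Type) [CommSemiring R] (A : Type)
    (M : SRTM R A) : ∀ (n : ℕ) (c : M.Config),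
    (∀ i, (c.2.1 i).2 ∈ Subsemiring.closure M.weights) →
    M.val n c ∈ Subsemiring.closure M.weights := by
  intro n
  induction n with
  | zero => intro c _; exact Subsemiring.one_mem _
  | succ n ih =>
    intro c hc
    rw [SRTM.val]
    split
    · exact Subsemiring.one_mem _
    · have hfin : (M.applicable c).Finite := by
        apply M.trans_fin.subset
        intro t ht; exact ht.1
      rw [finsum_mem_eq_finite_toFinset_sum _ hfin]
      apply Subsemiring.sum_mem
      intro t ht
      rw [Set.Finite.mem_toFinset] at ht
      apply Subsemiring.mul_mem
      · rw [SRTM.wt]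
        rcases h : t.2.2.2 with _ | r
        · simpa using hc c.2.2
        · simpa using Subsemiring.subset_closure (M.trans_wt t ht.1 r h)
      · apply ih
        intro i
        simp only [SRTM.stepTo]
        rcases eq_or_ne i c.2.2 with rfl | hi
        · simpa using hc c.2.2
        · simp only [Function.update_of_ne hi]; exact hc i

/-- On inputs without semiring values, the output of a terminating SRTM lies
in the subsemiring generated by its finite set `R'` of fixed weights; hence
every `NP_finite(R)` function has range in a finitely generated subsemiring,
and if `R` is not finitely generated as a semiring then no `NP_finite(R)`
function is surjective. -/
theorem SRTM_output_mem_closure_weights (R : Type) [CommSemiring R]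
    (A : Type) [Fintype A] :
    (∀ (M : SRTM R A) (ℓ : List (A ⊕ R) → ℕ), M.BoundedBy ℓ →
      ∀ s : List A, M.output ℓ (s.map Sum.inl) ∈ Subsemiring.closure M.weights) ∧
    (∀ f : List A → R, NPfinite R A f →
      ∃ S : Set R, S.Finite ∧ ∀ s, f s ∈ Subsemiring.closure S) ∧
    ((¬ ∃ S : Set R, S.Finite ∧ Subsemiring.closure S = ⊤) →
      ∀ f : List A → R, NPfinite R A f → ¬ Function.Surjective f) := by
  have h1 : ∀ (M : SRTM R A) (ℓ : List (A ⊕ R) → ℕ), M.BoundedBy ℓ →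
      ∀ s : List A, M.output ℓ (s.map Sum.inl) ∈ Subsemiring.closure M.weights := by
    intro M ℓ _ s
    apply SRTM_val_mem
    intro i
    show (M.initTape (s.map Sum.inl) i).2 ∈ _
    unfold SRTM.initTape
    split <;> simp_all [List.getElem?_map, Subsemiring.zero_mem]
  have h2 : ∀ f : List A → R, NPfinite R A f →
      ∃ S : Set R, S.Finite ∧ ∀ s, f s ∈ Subsemiring.closure S := by
    intro f hf
    obtain ⟨M, ℓ, p, hb, _, hout⟩ := hf
    refine ⟨M.weights, M.weights_fin, fun s => ?_⟩
    rw [hout s]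
    exact h1 M ℓ hb s
  refine ⟨h1, h2, ?_⟩
  intro hnfg f hf hsurj
  obtain ⟨S, hS, hmem⟩ := h2 f hf
  apply hnfg
  refine ⟨S, hS, ?_⟩
  rw [eq_top_iff]
  intro r _
  obtain ⟨s, rfl⟩ := hsurj r
  exact hmem s
end
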